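/- arXiv:2203.11184 — 6 statements merged into one kernel-verified Lean document; each statement's English description precedes it below -/
import Mathlib

section
/- The function (τ, e) ↦ C_v ( ln(e − (Π/(Γ+1))τ) + (1/Γ) ln τ − ln Γ ), defined for τ > 0 and e > (Π/(Γ+1))τ with fixed constants C_v > 0, Γ > 0, Π ≥ 0, is strictly concave on its domain. -/
/-- log inequality helper: concave combination, strict when the points differ. -/
lemma log_comb_le {p q a b : ℝ} (hp : 0 < p) (hq : 0 < q)
    (ha : 0 < a) (hb : 0 < b) (hab : a + b = 1) :
    a * Real.log p + b * Real.log q ≤ Real.log (a * p + b * q) := by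
  have := strictConcaveOn_log_Ioi.concaveOn.2 (Set.mem_Ioi.2 hp) (Set.mem_Ioi.2 hq)
    ha.le hb.le hab
  simpa using this

lemma log_comb_lt {p q a b : ℝ} (hp : 0 < p) (hq : 0 < q) (hpq : p ≠ q)
    (ha : 0 < a) (hb : 0 < b) (hab : a + b = 1) :
    a * Real.log p + b * Real.log q < Real.log (a * p + b * q) := by
  have := strictConcaveOn_log_Ioi.2 (Set.mem_Ioi.2 hp) (Set.mem_Ioi.2 hq)
    hpq ha hb hab
  simpa using this

/-- Strict concavity of the SG-gamma specific entropy
(τ,e) ↦ C_v(ln(e − Π/(Γ+1) τ) + (1/Γ) ln τ − ln Γ) on its natural domain. -/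
theorem entropy_strictConcaveOn (Cv Γ Piv : ℝ)
    (hCv : 0 < Cv) (hΓ : 0 < Γ) (hPiv : 0 ≤ Piv) :
    StrictConcaveOn ℝ
      {q : ℝ × ℝ | 0 < q.1 ∧ Piv / (Γ + 1) * q.1 < q.2}
      (fun q : ℝ × ℝ =>
        Cv * (Real.log (q.2 - Piv / (Γ + 1) * q.1)
          + (1 / Γ) * Real.log q.1 - Real.log Γ)) := by
  set c : ℝ := Piv / (Γ + 1) with hc
  constructor
  · intro x hx y hy a b ha hb hab
    obtain ⟨hx1, hx2⟩ := hx
    obtain ⟨hy1, hy2⟩ := hy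
    constructor
    · simp only [Prod.fst_add, Prod.smul_fst, smul_eq_mul]
      rcases eq_or_lt_of_le ha with h | h
      · simp [← h, (by linarith : b = 1)]
        exact hy1
      · nlinarith
    · simp only [Set.mem_setOf_eq, Prod.fst_add, Prod.snd_add, Prod.smul_fst, Prod.smul_snd,
        smul_eq_mul]
      have hdist : c * (a * x.1 + b * y.1) = a * (c * x.1) + b * (c * y.1) := by ring
      have h1 := mul_le_mul_of_nonneg_left hx2.le ha
      have h2 := mul_le_mul_of_nonneg_left hy2.le hb
      rcases eq_or_lt_of_le ha with h | h
      · have hb1 : b = 1 := by linarith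
        have := mul_lt_mul_of_pos_left hy2 (by linarith : (0:ℝ) < b)
        linarith
      · have := mul_lt_mul_of_pos_left hx2 h
        linarith
  · intro x hx y hy hxy a b ha hb hab
    obtain ⟨hx1, hx2⟩ := hx
    obtain ⟨hy1, hy2⟩ := hy
    have hux : 0 < x.2 - c * x.1 := by linarith
    have huy : 0 < y.2 - c * y.1 := by linarith
    have hΓinv : 0 < 1 / Γ := by positivity
    simp only [Prod.fst_add, Prod.snd_add, Prod.smul_fst, Prod.smul_snd, smul_eq_mul]
    have hulin : a * x.2 + b * y.2 - c * (a * x.1 + b * y.1)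
        = a * (x.2 - c * x.1) + b * (y.2 - c * y.1) := by ring
    have h1 : a * Real.log (x.2 - c * x.1) + b * Real.log (y.2 - c * y.1)
        ≤ Real.log (a * x.2 + b * y.2 - c * (a * x.1 + b * y.1)) := by
      rw [hulin]; exact log_comb_le hux huy ha hb hab
    have h2 : a * Real.log x.1 + b * Real.log y.1 ≤ Real.log (a * x.1 + b * y.1) :=
      log_comb_le hx1 hy1 ha hb hab
    have key : a * Real.log (x.2 - c * x.1) + b * Real.log (y.2 - c * y.1)
          + (1 / Γ) * (a * Real.log x.1 + b * Real.log y.1)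
        < Real.log (a * x.2 + b * y.2 - c * (a * x.1 + b * y.1))
          + (1 / Γ) * Real.log (a * x.1 + b * y.1) := by
      rcases eq_or_ne x.1 y.1 with h | h
      · have hne : x.2 - c * x.1 ≠ y.2 - c * y.1 := by
          intro hEq
          apply hxy
          have : x.2 = y.2 := by rw [h] at hEq; linarith
          exact Prod.ext h this
        have h1' : a * Real.log (x.2 - c * x.1) + b * Real.log (y.2 - c * y.1)
            < Real.log (a * x.2 + b * y.2 - c * (a * x.1 + b * y.1)) := by
          rw [hulin]; exact log_comb_lt hux huy hne ha hb hab
        nlinarith [mul_le_mul_of_nonneg_left h2 hΓinv.le]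
      · have h2' : a * Real.log x.1 + b * Real.log y.1 < Real.log (a * x.1 + b * y.1) :=
          log_comb_lt hx1 hy1 h ha hb hab
        nlinarith [mul_lt_mul_of_pos_left h2' hΓinv]
    have := mul_lt_mul_of_pos_left key hCv
    calc a • (Cv * (Real.log (x.2 - c * x.1) + 1 / Γ * Real.log x.1 - Real.log Γ))
          + b • (Cv * (Real.log (y.2 - c * y.1) + 1 / Γ * Real.log y.1 - Real.log Γ))
        = Cv * (a * Real.log (x.2 - c * x.1) + b * Real.log (y.2 - c * y.1)
          + (1 / Γ) * (a * Real.log x.1 + b * Real.log y.1)) - Cv * Real.log Γ := by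
          simp only [smul_eq_mul]
          linear_combination (-(Cv * Real.log Γ)) * hab
      _ < Cv * (Real.log (a * x.2 + b * y.2 - c * (a * x.1 + b * y.1))
          + (1 / Γ) * Real.log (a * x.1 + b * y.1)) - Cv * Real.log Γ := by linarith
      _ = Cv * (Real.log (a * x.2 + b * y.2 - c * (a * x.1 + b * y.1))
          + 1 / Γ * Real.log (a * x.1 + b * y.1) - Real.log Γ) := by ring
end

section
/- For the SG-gamma model with entropy η(u) = −ρ s where s = C_v ln((p+p_∞)/ρ^γ) and p given by the stiffened gas EOS, the entropy potential ψ(u) = f(u)ᵀϑ(u) − q(u) equals ((γ−1)C_v ρ − p_∞ ζ) v, where ζ = (γ−1)C_v ρ/(p + p_∞), f is the Euler flux, q(u) = −ρ s v, and ϑ(u) are the entropy variables ϑ = (γC_v − s − ζ|v|²/2, ζv, −ζ, 0, 0). -/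
/-- The entropy potential ψ = fᵀϑ − q of the SG-gamma model (pure phase)
equals ((γ−1)C_v ρ − p_∞ ζ) v, componentwise in each space direction. -/
theorem entropy_potential_formula (d : ℕ) (γ Cv pinf ρ : ℝ) (v : Fin d → ℝ)
    (ρe p s ζ ρE ϑ1 : ℝ)
    (hγ : 1 < γ) (hCv : 0 < Cv) (hpinf : 0 ≤ pinf) (hρ : 0 < ρ)
    (hρe : pinf < ρe)
    (hp : p = (γ - 1) * ρe - γ * pinf)
    (hρE : ρE = ρe + ρ * (∑ j, (v j)^2) / 2)
    (hs : s = Cv * Real.log ((p + pinf) / ρ ^ γ))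
    (hζ : ζ = (γ - 1) * Cv * ρ / (p + pinf))
    (hϑ1 : ϑ1 = γ * Cv - s - ζ * (∑ j, (v j)^2) / 2) :
    ∀ i : Fin d,
      ϑ1 * (ρ * v i)
        + (∑ j, (ζ * v j) * (ρ * v j * v i + p * (if i = j then (1:ℝ) else 0)))
        + (-ζ) * ((ρE + p) * v i)
        - (-(ρ * s * v i))
      = ((γ - 1) * Cv * ρ - pinf * ζ) * v i := by
  intro i
  have hpp : p + pinf = (γ - 1) * (ρe - pinf) := by rw [hp]; ring
  have hppos : 0 < p + pinf := by
    rw [hpp]; apply mul_pos <;> linarith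
  have hζ' : ζ * (ρe - pinf) = Cv * ρ := by
    rw [hζ]
    field_simp
    linear_combination (-1 : ℝ) * hpp
  have hsum : (∑ j, (ζ * v j) * (ρ * v j * v i + p * (if i = j then (1:ℝ) else 0)))
      = ζ * ρ * (∑ j, (v j)^2) * v i + ζ * p * v i := by
    simp only [mul_add, Finset.sum_add_distrib, mul_ite, mul_one, mul_zero,
      Finset.sum_ite_eq, Finset.mem_univ, if_true]
    have : ∑ j, ζ * v j * (ρ * v j * v i) = ζ * ρ * (∑ j, (v j)^2) * v i := by
      simp only [Finset.mul_sum, Finset.sum_mul]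
      exact Finset.sum_congr rfl fun j _ => by ring
    rw [this]; ring
  rw [hsum, hϑ1, hρE]
  linear_combination (-(v i)) * hζ'
end

section
/- The contact-preserving numerical fluxes h_cp(u⁻,u⁺,n) = (ρ̄ v̄·n, ρ̄ v̄ (v̄·n) + p̄ n, (ρE‾ + p̄) v̄·n, 0, 0) together with nonconservative fluctuations d±_cp = (1/2)(v±·n)(0,0,0,⟦Γ⟧,⟦Π⟧) preserve uniform velocity and pressure: if v⁻ = v⁺ = v and p⁻ = p⁺ = p (with arbitrary jumps in ρ, Γ, Π consistent with the mixture EOS ρE = pΓ + Π + ρ|v|²/2), then the sufficient contact-preservation conditions hold: (i) the momentum flux equals v times the mass flux plus p n; (ii) h^{ρE}_cp − (ρE⁻ + p)(v·n) = (|v|²/2)(h^{ρ}_cp − ρ⁻ v·n) + (p/2)(d⁻_Γ(u⁻,u⁺,n) − d⁺_Γ(u⁺,u⁻,n)) + (1/2)(d⁻_Π(u⁻,u⁺,n) − d⁺_Π(u⁺,u⁻,n)). -/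
/-- The contact-preserving fluxes together with the nonconservative fluctuations
satisfy the sufficient conditions for preservation of uniform velocity and
pressure across a material interface. -/
theorem cp_flux_contact_preservation (d : ℕ) (n v : Fin d → ℝ)
    (ρm ρp Em Ep Γm Γp PiM PiP p : ℝ)
    (hρm : 0 < ρm) (hρp : 0 < ρp)
    (hEOSm : ρm * Em = p * Γm + PiM + ρm * (∑ i, (v i)^2) / 2)
    (hEOSp : ρp * Ep = p * Γp + PiP + ρp * (∑ i, (v i)^2) / 2) :
    -- (i) momentum flux = v · (mass flux) + p n
    (∀ i : Fin d,
      (ρp + ρm) / 2 * v i * (∑ j, v j * n j) + p * n i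
        = v i * ((ρp + ρm) / 2 * (∑ j, v j * n j)) + p * n i) ∧
    -- (ii) energy flux condition
    ((ρp * Ep + ρm * Em) / 2 + p) * (∑ j, v j * n j)
        - (ρm * Em + p) * (∑ j, v j * n j)
      = (∑ i, (v i)^2) / 2
          * ((ρp + ρm) / 2 * (∑ j, v j * n j) - ρm * (∑ j, v j * n j))
        + p / 2 * ((1 / 2) * (∑ j, v j * n j) * (Γp - Γm)
            - (1 / 2) * (∑ j, v j * n j) * (Γm - Γp))
        + (1 / 2) * ((1 / 2) * (∑ j, v j * n j) * (PiP - PiM)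
            - (1 / 2) * (∑ j, v j * n j) * (PiM - PiP)) := by
  refine ⟨fun i => by ring, ?_⟩
  rw [hEOSm, hEOSp]; ring
end

section
/- In the HLLC solver for the SG-gamma model, if p_L = p_R = p and v_L·n = v_R·n = u (uniform pressure and normal velocity), then the intermediate pressure and contact speed are p* = p and s* = u, so an isolated material interface is exactly preserved. -/
/-- HLLC preserves isolated material interfaces: if p_L = p_R = p and
u_L = u_R = u, then p* = p and s* = u. -/
theorem hllc_contact_preservation (ρL ρR u p sL sR : ℝ)
    (hρL : 0 < ρL) (hρR : 0 < ρR) (hsL : sL < u) (hsR : u < sR) :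
    (ρL * (u - sL) * p + ρR * (sR - u) * p
        + ρR * (sR - u) * (ρL * (u - sL)) * (u - u))
      / (ρL * (u - sL) + ρR * (sR - u)) = p ∧
    (ρL * (u - sL) * u + ρR * (sR - u) * u + p - p)
      / (ρL * (u - sL) + ρR * (sR - u)) = u := by
  have h1 : 0 < ρL * (u - sL) := mul_pos hρL (sub_pos.mpr hsL)
  have h2 : 0 < ρR * (sR - u) := mul_pos hρR (sub_pos.mpr hsR)
  have hQ : ρL * (u - sL) + ρR * (sR - u) ≠ 0 := (add_pos h1 h2).ne'
  constructor <;> field_simp <;> ring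
end

section
/- Positivity of the left HLLC intermediate internal energy: for a stiffened gas with γ_L > 1, p_L + p_{∞L} > 0, ρ_L > 0, the quadratic inequality (u_L − s_L)(ρ_L/2)σ² + (p_L + p_{∞L})σ + (u_L − s_L)(p_L + p_{∞L})/(γ_L − 1) > 0 holds for all σ ∈ ℝ provided the wave speed estimate satisfies s_L < u_L − c_L √((γ_L−1)/(2γ_L)), where c_L = √(γ_L(p_L + p_{∞L})/ρ_L); equivalently the discriminant (p_L+p_{∞L})² − 2ρ_L(u_L − s_L)²(p_L+p_{∞L})/(γ_L−1) is negative. -/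
/-- Positivity of the left HLLC intermediate internal energy: under the wave
speed estimate s_L < u_L − c_L √((γ−1)/(2γ)), the quadratic in σ is positive
for all σ, equivalently the discriminant is negative. -/
theorem hllc_internal_energy_pos (γ pinf ρL pL uL sL : ℝ)
    (hγ : 1 < γ) (hpinf : 0 ≤ pinf) (hρ : 0 < ρL) (hp : 0 < pL + pinf)
    (hsL : sL < uL - Real.sqrt (γ * (pL + pinf) / ρL) * Real.sqrt ((γ - 1) / (2 * γ))) :
    (∀ σ : ℝ,
      0 < (uL - sL) * (ρL / 2) * σ^2 + (pL + pinf) * σ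
            + (uL - sL) * ((pL + pinf) / (γ - 1))) ∧
    (pL + pinf)^2 - 2 * ρL * (uL - sL)^2 * ((pL + pinf) / (γ - 1)) < 0 := by
  set P := pL + pinf with hP
  set d := uL - sL with hd
  have hγ0 : (0:ℝ) < γ := by linarith
  have hγ1 : (0:ℝ) < γ - 1 := by linarith
  have hab : Real.sqrt (γ * P / ρL) * Real.sqrt ((γ - 1) / (2 * γ))
      = Real.sqrt (γ * P / ρL * ((γ - 1) / (2 * γ))) :=
    (Real.sqrt_mul (by positivity) _).symm
  have hdgt : Real.sqrt (γ * P / ρL * ((γ - 1) / (2 * γ))) < d := by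
    rw [← hab]; linarith
  have hsnn : 0 ≤ Real.sqrt (γ * P / ρL * ((γ - 1) / (2 * γ))) := Real.sqrt_nonneg _
  have hd0 : 0 < d := lt_of_le_of_lt hsnn hdgt
  have hsq : γ * P / ρL * ((γ - 1) / (2 * γ)) < d ^ 2 := by
    have := Real.sq_sqrt (show (0:ℝ) ≤ γ * P / ρL * ((γ - 1) / (2 * γ)) by positivity)
    nlinarith [mul_lt_mul'' hdgt hdgt hsnn hsnn]
  have hX : P * (γ - 1) / (2 * ρL) < d ^ 2 := by
    have : γ * P / ρL * ((γ - 1) / (2 * γ)) = P * (γ - 1) / (2 * ρL) := by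
      field_simp
    linarith [this ▸ hsq]
  have hdisc : P ^ 2 - 2 * ρL * d ^ 2 * (P / (γ - 1)) < 0 := by
    rw [sub_neg]
    rw [show P ^ 2 = 2 * ρL * (P * (γ - 1) / (2 * ρL)) * (P / (γ - 1)) by
      field_simp]
    have h1 : 0 < P / (γ - 1) := by positivity
    have h2 : (0:ℝ) < 2 * ρL := by positivity
    exact mul_lt_mul_of_pos_right (mul_lt_mul_of_pos_left hX h2) h1
  clear_value P d
  refine ⟨fun σ => ?_, hdisc⟩
  have hc : 0 < d * (P / (γ - 1)) := by positivity
  have key : 2 * (d * ρL) * 0 < 2 * (d * ρL) *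
      (d * (ρL / 2) * σ ^ 2 + P * σ + d * (P / (γ - 1))) := by
    have hg : (γ - 1) ≠ 0 := by positivity
    nlinarith [sq_nonneg (d * ρL * σ + P), hdisc, mul_pos hd0 hρ]
  have h2 : (0:ℝ) ≤ 2 * (d * ρL) := by positivity
  exact lt_of_mul_lt_mul_left key h2
end

section
/- If a three-point scheme U_j^{n+1} = U_j^n − (Δt/h)(D⁻(U_j^n, U_{j+1}^n, n) + D⁺(U_{j−1}^n, U_j^n, n)) with consistent fluctuations (D±(u,u,n) = 0 for D± minus/plus the flux differences) satisfies the discrete entropy inequality η(U_j^{n+1}) ≤ η(U_j^n) − (Δt/h)(Q(U_j^n,U_{j+1}^n,n) − Q(U_{j−1}^n,U_j^n,n)) for all data, with η differentiable, then in the limit Δt → 0⁺ the fluctuations are entropy stable: ϑ(u_L)·D⁻(u_L,u_R,n) + ϑ(u_R)·D⁺(u_L,u_R,n) ≥ q(u_R)·n − q(u_L)·n, where ϑ = ∇η and Q is a consistent entropy flux (Q(u,u,n) = q(u)·n). -/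
open scoped RealInnerProductSpace

/-- If a consistent three-point fluctuation scheme satisfies a discrete entropy
inequality for all data and all mesh ratios, then the fluctuations are entropy
stable: ϑ(u_L)·D⁻ + ϑ(u_R)·D⁺ ≥ q(u_R)·n − q(u_L)·n (with n fixed,
q here denotes u ↦ q(u)·n). -/
theorem entropy_inequality_implies_entropy_stable_fluctuations
    {m : ℕ} (η q : EuclideanSpace ℝ (Fin m) → ℝ)
    (Dm Dp : EuclideanSpace ℝ (Fin m) → EuclideanSpace ℝ (Fin m) →
      EuclideanSpace ℝ (Fin m))
    (Q : EuclideanSpace ℝ (Fin m) → EuclideanSpace ℝ (Fin m) → ℝ)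
    (hη : ∀ u, DifferentiableAt ℝ η u)
    (hDm : ∀ u, Dm u u = 0) (hDp : ∀ u, Dp u u = 0)
    (hQ : ∀ u, Q u u = q u)
    (hscheme : ∀ lam : ℝ, 0 < lam → ∀ U : ℤ → EuclideanSpace ℝ (Fin m), ∀ j : ℤ,
      η (U j - lam • (Dm (U j) (U (j + 1)) + Dp (U (j - 1)) (U j)))
        ≤ η (U j) - lam * (Q (U j) (U (j + 1)) - Q (U (j - 1)) (U j))) :
    ∀ uL uR : EuclideanSpace ℝ (Fin m),
      ⟪gradient η uL, Dm uL uR⟫ + ⟪gradient η uR, Dp uL uR⟫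
        ≥ q uR - q uL := by
  intro uL uR
  set v := Dm uL uR with hv
  set w := Dp uL uR with hw
  -- the step-function data
  set U : ℤ → EuclideanSpace ℝ (Fin m) := fun j => if j ≤ 0 then uL else uR with hU
  have hU0 : U 0 = uL := by simp [hU]
  have hUm1 : U (-1) = uL := by simp [hU]
  have hU1 : U 1 = uR := by simp [hU]
  have hU2 : U 2 = uR := by simp [hU]
  -- key inequality for every positive lam
  have key : ∀ lam : ℝ, 0 < lam →
      η uL + η uR - (η (uL - lam • v) + η (uR - lam • w))
        ≥ lam * (q uR - q uL) := by
    intro lam hl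
    have h0 := hscheme lam hl U 0
    have h1 := hscheme lam hl U 1
    rw [show (0:ℤ) + 1 = 1 from rfl, show (0:ℤ) - 1 = -1 from rfl,
      hU0, hU1, hUm1] at h0
    rw [show (1:ℤ) + 1 = 2 from rfl, show (1:ℤ) - 1 = 0 from rfl,
      hU0, hU1, hU2] at h1
    rw [hDp uL, hQ uL, add_zero] at h0
    rw [hDm uR, hQ uR, zero_add] at h1
    nlinarith [h0, h1]
  -- the function whose slope at 0 we study
  set F : ℝ → ℝ := fun lam =>
    η uL + η uR - (η (uL - lam • v) + η (uR - lam • w)) with hF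
  have hF0 : F 0 = 0 := by simp [hF]
  have hderL : HasDerivAt (fun lam : ℝ => η (uL - lam • v))
      (-⟪gradient η uL, v⟫) 0 := by
    have hc : HasDerivAt (fun lam : ℝ => uL - lam • v) (-v) 0 := by
      simpa using ((hasDerivAt_id (0:ℝ)).smul_const v).const_sub uL
    have hg : HasFDerivAt η
        ((InnerProductSpace.toDual ℝ (EuclideanSpace ℝ (Fin m))) (gradient η uL))
        (uL - (0:ℝ) • v) := by simpa using ((hη uL).hasGradientAt.hasFDerivAt)
    have := hg.comp_hasDerivAt (0 : ℝ) hc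
    simpa [real_inner_smul_right, inner_neg_right, Function.comp_def] using this
  have hderR : HasDerivAt (fun lam : ℝ => η (uR - lam • w))
      (-⟪gradient η uR, w⟫) 0 := by
    have hc : HasDerivAt (fun lam : ℝ => uR - lam • w) (-w) 0 := by
      simpa using ((hasDerivAt_id (0:ℝ)).smul_const w).const_sub uR
    have hg : HasFDerivAt η
        ((InnerProductSpace.toDual ℝ (EuclideanSpace ℝ (Fin m))) (gradient η uR))
        (uR - (0:ℝ) • w) := by simpa using ((hη uR).hasGradientAt.hasFDerivAt)
    have := hg.comp_hasDerivAt (0 : ℝ) hc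
    simpa [real_inner_smul_right, inner_neg_right, Function.comp_def] using this
  have hderF : HasDerivAt F (⟪gradient η uL, v⟫ + ⟪gradient η uR, w⟫) 0 := by
    have := (hderL.add hderR).const_sub (η uL + η uR)
    simpa [hF, neg_add, sub_neg_eq_add, add_comm] using this
  -- slope tendsto
  have hslope := hasDerivAt_iff_tendsto_slope.mp hderF
  have hslope' : Filter.Tendsto (slope F 0) (nhdsWithin 0 (Set.Ioi 0))
      (nhds (⟪gradient η uL, v⟫ + ⟪gradient η uR, w⟫)) :=
    hslope.mono_left (nhdsWithin_mono 0 (fun x hx => ne_of_gt hx))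
  refine ge_of_tendsto hslope' ?_
  filter_upwards [self_mem_nhdsWithin] with lam (hl : lam ∈ Set.Ioi 0)
  have hk := key lam hl
  have : slope F 0 lam = F lam / lam := by
    simp [slope, hF0, inv_mul_eq_div]
  rw [this, le_div_iff₀ hl]
  have hk' : lam * (q uR - q uL) ≤ F lam := key lam hl
  nlinarith [hk']
end
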